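/- For every path-complete graph G = (N, E) on a finite nonempty alphabet S there exists a graph O_G = (N_O, E_O) on S, with N_O a collection of nonempty subsets of N, which is deterministic and complete, and such that the following holds for every n ≥ 1 and every family F = {f_i : ℝⁿ → ℝⁿ}_{i∈S} of continuous maps: if V = {V_s : ℝⁿ → ℝ}_{s∈N} is such that (V, G) is a path-complete Lyapunov function for F, then, defining W_P(x) := max_{s∈P} V_s(x) for each P ∈ N_O, the pair ({W_P}_{P∈N_O}, O_G) is a path-complete Lyapunov function for F. -/

import Mathlib

open Filter Topology NNReal

def IsClassKInf (α : ℝ≥0 → ℝ≥0) : Prop :=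
  Continuous α ∧ α 0 = 0 ∧ StrictMono α ∧ ∀ M : ℝ≥0, ∃ r, M ≤ α r

def IsClassKL (β : ℝ≥0 → ℝ≥0 → ℝ≥0) : Prop :=
  Continuous (fun p : ℝ≥0 × ℝ≥0 => β p.1 p.2) ∧
  (∀ t, Continuous (fun r => β r t) ∧ β 0 t = 0 ∧ StrictMono (fun r => β r t)) ∧
  (∀ r, Antitone (β r) ∧ Tendsto (β r) atTop (𝓝 0))

def PathComplete {N S : Type*} (E : Set (N × N × S)) : Prop :=
  ∀ K : ℕ, 1 ≤ K → ∀ j : Fin K → S, ∃ a : Fin (K + 1) → N,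
    ∀ k : Fin K, (a k.castSucc, a k.succ, j k) ∈ E

def sol {n : ℕ} {S : Type*} (f : S → EuclideanSpace ℝ (Fin n) → EuclideanSpace ℝ (Fin n))
    (σ : ℕ → S) (x0 : EuclideanSpace ℝ (Fin n)) : ℕ → EuclideanSpace ℝ (Fin n)
  | 0 => x0
  | k + 1 => f (σ k) (sol f σ x0 k)

def UGAS {n : ℕ} {S : Type*}
    (f : S → EuclideanSpace ℝ (Fin n) → EuclideanSpace ℝ (Fin n)) : Prop :=
  ∃ β : ℝ≥0 → ℝ≥0 → ℝ≥0, IsClassKL β ∧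
    ∀ (σ : ℕ → S) (x0 : EuclideanSpace ℝ (Fin n)) (k : ℕ),
      ‖sol f σ x0 k‖₊ ≤ β ‖x0‖₊ (k : ℝ≥0)

def IsPCLF {n : ℕ} {S N : Type*} (E : Set (N × N × S))
    (f : S → EuclideanSpace ℝ (Fin n) → EuclideanSpace ℝ (Fin n))
    (V : N → EuclideanSpace ℝ (Fin n) → ℝ) : Prop :=
  PathComplete E ∧ (∀ s, Continuous (V s)) ∧
  ∃ (α₁ α₂ : ℝ≥0 → ℝ≥0) (γ : ℝ≥0), IsClassKInf α₁ ∧ IsClassKInf α₂ ∧ γ < 1 ∧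
    (∀ s x, (α₁ ‖x‖₊ : ℝ) ≤ V s x ∧ V s x ≤ (α₂ ‖x‖₊ : ℝ)) ∧
    (∀ a b i, (a, b, i) ∈ E → ∀ x, V b (f i x) ≤ (γ : ℝ) * V a x)

def IsCoveringFamily {S : Type*} (C : Finset (Set (List S))) : Prop :=
  (∀ B ∈ C, Language.IsRegular (B : Language S)) ∧
  (⋃ B ∈ C, B) = Set.univ ∧
  ∀ B ∈ C, ∀ h : S, ∃ C' ∈ C, (fun w => h :: w) '' B ⊆ C'

def IsMBLF {n : ℕ} {S : Type*} (C : Finset (Set (List S)))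
    (f : S → EuclideanSpace ℝ (Fin n) → EuclideanSpace ℝ (Fin n))
    (W : {B // B ∈ C} → EuclideanSpace ℝ (Fin n) → ℝ) : Prop :=
  (∀ B, Continuous (W B)) ∧
  ∃ (α₁ α₂ : ℝ≥0 → ℝ≥0) (γ : ℝ≥0), IsClassKInf α₁ ∧ IsClassKInf α₂ ∧ γ < 1 ∧
    (∀ B x, (α₁ ‖x‖₊ : ℝ) ≤ W B x ∧ W B x ≤ (α₂ ‖x‖₊ : ℝ)) ∧
    (∀ (B C' : {B // B ∈ C}) (h : S),
      (fun w => h :: w) '' (B : Set (List S)) ⊆ (C' : Set (List S)) →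
      ∀ x, W C' (f h x) ≤ (γ : ℝ) * W B x)

def prefixClass {S : Type*} (i : List S) : Set (List S) := {w | w <+: i ∨ i <+: w}


open Classical in
noncomputable def obsStep {N S : Type} [Fintype N] (E : Set (N × N × S)) (i : S)
    (P : Finset N) : Finset N :=
  Finset.univ.filter (fun b => ∃ a ∈ P, (a, b, i) ∈ E)

noncomputable def obsReach {N S : Type} [Fintype N] (E : Set (N × N × S)) (w : List S) :
    Finset N :=
  w.foldl (fun P i => obsStep E i P) Finset.univ

lemma obsReach_append {N S : Type} [Fintype N] (E : Set (N × N × S)) (w : List S) (i : S) :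
    obsReach E (w ++ [i]) = obsStep E i (obsReach E w) := by
  simp [obsReach, List.foldl_append]

lemma mem_obsStep {N S : Type} [Fintype N] {E : Set (N × N × S)} {i : S} {P : Finset N}
    {b : N} : b ∈ obsStep E i P ↔ ∃ a ∈ P, (a, b, i) ∈ E := by
  simp [obsStep]

lemma obsReach_nonempty {S : Type} [Nonempty S] {N : Type} [Fintype N]
    (E : Set (N × N × S)) (hpc : PathComplete E) (w : List S) :
    (obsReach E w).Nonempty := by
  rcases w with _ | ⟨i0, w0⟩
  · obtain ⟨a, -⟩ := hpc 1 le_rfl (fun _ => Classical.arbitrary S)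
    exact ⟨a 0, by simp [obsReach]⟩
  · set w := i0 :: w0 with hw
    set K := w.length with hK
    have hK1 : 1 ≤ K := by simp [hK, hw]
    obtain ⟨a, ha⟩ := hpc K hK1 (fun k => w.get k)
    have key : ∀ k : ℕ, ∀ hk : k ≤ K, a ⟨k, Nat.lt_succ_of_le hk⟩ ∈ obsReach E (w.take k) := by
      intro k
      induction k with
      | zero => intro hk; simp [obsReach]
      | succ k ih =>
        intro hk
        have hkK : k < K := hk
        have ht : w.take (k + 1) = w.take k ++ [w.get ⟨k, hkK⟩] := by
          have hkl : k < w.length := hkK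
          rw [← List.take_concat_get hkl, List.concat_eq_append]
          rfl
        rw [ht, obsReach_append, mem_obsStep]
        refine ⟨a ⟨k, Nat.lt_succ_of_le hkK.le⟩, ih hkK.le, ?_⟩
        have := ha ⟨k, hkK⟩
        exact this
    have := key K le_rfl
    rw [List.take_length] at this
    exact ⟨_, this⟩

/-- Lemma 2, observer graph: every path-complete graph admits a
deterministic and complete "observer" graph whose nodes are nonempty subsets
of the original nodes, transporting PCLFs via pointwise maxima. -/
theorem observer_graph_pclf {S : Type} [Fintype S] [Nonempty S]
    {N : Type} [Fintype N] (E : Set (N × N × S)) (hpc : PathComplete E) :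
    ∃ (NO : Finset (Finset N)) (hne : ∀ P ∈ NO, P.Nonempty)
      (EO : Set ({P // P ∈ NO} × {P // P ∈ NO} × S)),
      (∀ (a b b' : {P // P ∈ NO}) (i : S),
        (a, b, i) ∈ EO → (a, b', i) ∈ EO → b = b') ∧
      (∀ (a : {P // P ∈ NO}) (i : S), ∃ b, (a, b, i) ∈ EO) ∧
      ∀ (n : ℕ), 1 ≤ n →
        ∀ f : S → EuclideanSpace ℝ (Fin n) → EuclideanSpace ℝ (Fin n),
          (∀ i, Continuous (f i)) →
          ∀ V : N → EuclideanSpace ℝ (Fin n) → ℝ, IsPCLF E f V →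
            IsPCLF EO f fun P x =>
              (P : Finset N).sup' (hne P P.prop) fun s => V s x :=  by
  classical
  set NO : Finset (Finset N) :=
    Finset.univ.filter (fun P => ∃ w : List S, obsReach E w = P) with hNO
  have hmem : ∀ P : Finset N, P ∈ NO ↔ ∃ w : List S, obsReach E w = P := by
    intro P; simp [hNO]
  have hne : ∀ P ∈ NO, P.Nonempty := by
    intro P hP
    obtain ⟨w, hw⟩ := (hmem P).1 hP
    exact hw ▸ obsReach_nonempty E hpc w
  refine ⟨NO, hne, {t | (t.2.1 : Finset N) = obsStep E t.2.2 (t.1 : Finset N)}, ?_, ?_, ?_⟩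
  · intro a b b' i hb hb'
    apply Subtype.ext
    simp only [Set.mem_setOf_eq] at hb hb'
    rw [hb, hb']
  · intro a i
    obtain ⟨w, hw⟩ := (hmem a.1).1 a.2
    refine ⟨⟨obsStep E i a.1, (hmem _).2 ⟨w ++ [i], ?_⟩⟩, rfl⟩
    rw [obsReach_append, hw]
  · intro n hn f hf V hV
    obtain ⟨hpcE, hVcont, α₁, α₂, γ, hα₁, hα₂, hγ, hbound, hdec⟩ := hV
    have hunivmem : Finset.univ ∈ NO := (hmem _).2 ⟨[], rfl⟩
    -- successor function
    set g : {P // P ∈ NO} → S → {P // P ∈ NO} := fun a i =>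
      ⟨obsStep E i a.1, by
        obtain ⟨w, hw⟩ := (hmem a.1).1 a.2
        exact (hmem _).2 ⟨w ++ [i], by rw [obsReach_append, hw]⟩⟩ with hg
    refine ⟨?_, ?_, α₁, α₂, γ, hα₁, hα₂, hγ, ?_, ?_⟩
    · -- path-complete
      intro K hK j
      set j' : ℕ → S := fun k => if h : k < K then j ⟨k, h⟩ else Classical.arbitrary S with hj'
      set b : ℕ → {P // P ∈ NO} := fun k =>
        Nat.rec (⟨Finset.univ, hunivmem⟩ : {P // P ∈ NO}) (fun k p => g p (j' k)) k with hb
      refine ⟨fun k => b k, fun k => ?_⟩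
      have h1 : b ((k : ℕ) + 1) = g (b (k : ℕ)) (j k) := by
        have hjj : j' (k : ℕ) = j k := by simp [hj', k.isLt]
        rw [← hjj]
      show (b (k.castSucc : ℕ), b (k.succ : ℕ), j k) ∈ _
      have h2 : ((k.succ : Fin (K+1)) : ℕ) = (k : ℕ) + 1 := rfl
      have h3 : ((k.castSucc : Fin (K+1)) : ℕ) = (k : ℕ) := rfl
      rw [h2, h3, h1]
      exact rfl
    · -- continuity
      intro P
      exact Continuous.finset_sup'_apply (hne P.1 P.2) (fun s _ => hVcont s)
    · -- bounds
      intro P x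
      obtain ⟨s, hs⟩ := hne P.1 P.2
      dsimp only
      constructor
      · exact le_trans (hbound s x).1 (Finset.le_sup' (fun u => V u x) hs)
      · exact Finset.sup'_le _ _ (fun t _ => (hbound t x).2)
    · -- decrease
      intro a b i hab x
      simp only [Set.mem_setOf_eq] at hab
      rw [Finset.sup'_le_iff]
      intro t ht
      rw [hab, mem_obsStep] at ht
      obtain ⟨s, hs, hedge⟩ := ht
      calc V t (f i x) ≤ (γ : ℝ) * V s x := hdec s t i hedge x
        _ ≤ (γ : ℝ) * ((a : Finset N).sup' (hne a.1 a.2) fun s => V s x) := by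
            apply mul_le_mul_of_nonneg_left (Finset.le_sup' _ hs) γ.coe_nonneg
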